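/- Let W_L be a right-angled Coxeter group on the vertex set of a simplicial complex L (generators are vertices, with relations v^2 = 1 and [v,w] = 1 whenever {v,w} spans an edge of L), let G be a Z/2-vector space, and let λ: L^{[0]} → G be a characteristic function, i.e., whenever vertices v_0,...,v_k span a k-simplex of L, the vectors λ(v_0),...,λ(v_k) are linearly independent over Z/2. Let Λ: W_L → G be the homomorphism extending λ. Then, assuming L is a flag complex, the kernel of Λ is torsion-free. -/

import Mathlib

/-!
STATEMENT 1: Let `W_L` be the right-angled Coxeter group on the vertex set of a flag
simplicial complex `L` (generators: vertices; relations: `v² = 1` and `(vw)² = 1` for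
edges `{v,w}` of `L`).  Let `λ : L⁰ → G` be a characteristic function into a
`ℤ/2`-vector space `G` (vertices of any simplex of `L` have linearly independent
`λ`-values), and let `Λ : W_L → G` be the homomorphism extending `λ`.  Then `ker Λ`
is torsion-free.
-/

/-- The defining relations of the right-angled Coxeter group of the complex `L`. -/
def racgRels (V : Type*) [DecidableEq V] (L : Set (Finset V)) : Set (FreeGroup V) :=
  {r | (∃ v : V, r = FreeGroup.of v * FreeGroup.of v) ∨
    ∃ v w : V, v ≠ w ∧ ({v, w} : Finset V) ∈ L ∧
      r = (FreeGroup.of v * FreeGroup.of w) ^ 2}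

namespace RacgProof

variable {V : Type*}

section Combinatorics

variable (A : V → V → Prop)

/-- `v` can be brought to the front of `l` by commutations. -/
def Starts (v : V) (l : List V) : Prop :=
  ∃ a b, l = a ++ v :: b ∧ ∀ x ∈ a, A x v

/-- `v` can be brought to the end of `l` by commutations. -/
def Ends (v : V) (l : List V) : Prop :=
  ∃ a b, l = a ++ v :: b ∧ ∀ x ∈ b, A x v

/-- `l` is non-reduced. -/
def Bad (l : List V) : Prop :=
  ∃ (v : V) (a b c : List V), l = a ++ v :: b ++ v :: c ∧ ∀ x ∈ b, A x v

def Red (l : List V) : Prop := ¬ Bad A l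

/-- elementary commutation move -/
def Swap (l l' : List V) : Prop :=
  ∃ (x y : V) (a b : List V), A x y ∧ l = a ++ x :: y :: b ∧ l' = a ++ y :: x :: b

variable {A}

lemma starts_nil (v : V) : ¬ Starts A v [] := by
  rintro ⟨a, b, h, -⟩; simp at h

lemma starts_cons {v z : V} {m : List V} :
    Starts A v (z :: m) ↔ v = z ∨ (A z v ∧ Starts A v m) := by
  constructor
  · rintro ⟨a, b, he, ha⟩
    cases a with
    | nil =>
      left; exact (List.head_eq_of_cons_eq he.symm)
    | cons x a' =>
      right
      obtain ⟨hx, hm⟩ : x = z ∧ m = a' ++ v :: b := by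
        constructor
        · exact (List.head_eq_of_cons_eq he.symm)
        · simpa using (List.tail_eq_of_cons_eq he.symm).symm
      subst hx
      exact ⟨ha x (by simp), a', b, hm, fun y hy => ha y (by simp [hy])⟩
  · rintro (rfl | ⟨hz, a, b, rfl, ha⟩)
    · exact ⟨[], m, rfl, by simp⟩
    · exact ⟨z :: a, b, rfl, by
        intro x hx
        rcases List.mem_cons.mp hx with rfl | hx
        · exact hz
        · exact ha x hx⟩

lemma ends_nil (v : V) : ¬ Ends A v [] := by
  rintro ⟨a, b, h, -⟩; simp at h

lemma ends_cons {v z : V} {m : List V} :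
    Ends A v (z :: m) ↔ (v = z ∧ ∀ x ∈ m, A x v) ∨ Ends A v m := by
  constructor
  · rintro ⟨a, b, he, hb⟩
    cases a with
    | nil =>
      left
      have h1 : v = z := (List.head_eq_of_cons_eq he.symm)
      have h2 : m = b := by simpa using (List.tail_eq_of_cons_eq he.symm).symm
      exact ⟨h1, by rw [h2]; exact hb⟩
    | cons x a' =>
      right
      exact ⟨a', b, by simpa using (List.tail_eq_of_cons_eq he.symm).symm, hb⟩
  · rintro (⟨rfl, hm⟩ | ⟨a, b, rfl, hb⟩)
    · exact ⟨[], m, rfl, hm⟩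
    · exact ⟨z :: a, b, rfl, hb⟩

lemma starts_append {v : V} {p q : List V} :
    Starts A v (p ++ q) ↔ Starts A v p ∨ ((∀ x ∈ p, A x v) ∧ Starts A v q) := by
  induction p with
  | nil => simp [starts_nil]
  | cons z p' ih =>
    simp only [List.cons_append, starts_cons, ih, List.mem_cons]
    constructor
    · rintro (rfl | ⟨hz, h | ⟨hp, hq⟩⟩)
      · exact Or.inl (Or.inl rfl)
      · exact Or.inl (Or.inr ⟨hz, h⟩)
      · exact Or.inr ⟨by rintro x (rfl | hx); exacts [hz, hp x hx], hq⟩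
    · rintro ((rfl | ⟨hz, h⟩) | ⟨hall, hq⟩)
      · exact Or.inl rfl
      · exact Or.inr ⟨hz, Or.inl h⟩
      · exact Or.inr ⟨hall z (Or.inl rfl), Or.inr ⟨fun x hx => hall x (Or.inr hx), hq⟩⟩

lemma bad_cons {z : V} {m : List V} :
    Bad A (z :: m) ↔ Starts A z m ∨ Bad A m := by
  constructor
  · rintro ⟨v, a, b, c, he, hb⟩
    cases a with
    | nil =>
      left
      have h1 : v = z := (List.head_eq_of_cons_eq he.symm)
      have h2 : m = b ++ v :: c := by simpa using (List.tail_eq_of_cons_eq he.symm).symm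
      subst h1
      exact ⟨b, c, h2, hb⟩
    | cons x a' =>
      right
      exact ⟨v, a', b, c, by simpa using (List.tail_eq_of_cons_eq he.symm).symm, hb⟩
  · rintro (⟨a, b, rfl, ha⟩ | ⟨v, a, b, c, rfl, hb⟩)
    · exact ⟨z, [], a, b, rfl, ha⟩
    · exact ⟨v, z :: a, b, c, rfl, hb⟩

lemma red_nil : Red A ([] : List V) := by
  rintro ⟨v, a, b, c, h, -⟩; simp at h

lemma red_cons {z : V} {m : List V} :
    Red A (z :: m) ↔ ¬ Starts A z m ∧ Red A m := by
  rw [Red, bad_cons]; tauto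

lemma bad_append {p q : List V} :
    Bad A (p ++ q) ↔ Bad A p ∨ Bad A q ∨ ∃ v, Ends A v p ∧ Starts A v q := by
  induction p with
  | nil =>
    simp only [List.nil_append]
    constructor
    · exact fun h => Or.inr (Or.inl h)
    · rintro ((⟨v,a,b,c,h,-⟩) | h | ⟨v, he, -⟩)
      · simp at h
      · exact h
      · exact absurd he (ends_nil v)
  | cons z p' ih =>
    simp only [List.cons_append, bad_cons, ih, starts_append]
    constructor
    · rintro ((h | ⟨hall, hq⟩) | h | h | ⟨v, hv, hq⟩)
      · exact Or.inl (Or.inl h)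
      · exact Or.inr (Or.inr ⟨z, ends_cons.mpr (Or.inl ⟨rfl, hall⟩), hq⟩)
      · exact Or.inl (Or.inr h)
      · exact Or.inr (Or.inl h)
      · exact Or.inr (Or.inr ⟨v, ends_cons.mpr (Or.inr hv), hq⟩)
    · rintro ((h | h) | h | ⟨v, hv, hq⟩)
      · exact Or.inl (Or.inl h)
      · exact Or.inr (Or.inl h)
      · exact Or.inr (Or.inr (Or.inl h))
      · rcases ends_cons.mp hv with ⟨rfl, hall⟩ | hv
        · exact Or.inl (Or.inr ⟨hall, hq⟩)
        · exact Or.inr (Or.inr (Or.inr ⟨v, hv, hq⟩))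

lemma starts_mem {v : V} {l : List V} (h : Starts A v l) : v ∈ l := by
  obtain ⟨a, b, rfl, -⟩ := h; simp

lemma ends_mem {v : V} {l : List V} (h : Ends A v l) : v ∈ l := by
  obtain ⟨a, b, rfl, -⟩ := h; simp

lemma starts_append_right {v : V} {p q : List V} (h : Starts A v p) :
    Starts A v (p ++ q) := starts_append.mpr (Or.inl h)

section Sym

lemma not_mem_of_all_adj (hi : ∀ x : V, ¬ A x x) {v : V} {a : List V}
    (ha : ∀ x ∈ a, A x v) : v ∉ a :=
  fun hv => hi v (ha v hv)

lemma starts_cons_cons (hs : ∀ x y : V, A x y → A y x)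
    {v x y : V} {b : List V} (hxy : A x y) :
    Starts A v (x :: y :: b) ↔ Starts A v (y :: x :: b) := by
  simp only [starts_cons]
  constructor
  · rintro (rfl | ⟨hxv, rfl | ⟨hyv, hb⟩⟩)
    · exact Or.inr ⟨hs _ _ hxy, Or.inl rfl⟩
    · exact Or.inl rfl
    · exact Or.inr ⟨hyv, Or.inr ⟨hxv, hb⟩⟩
  · rintro (rfl | ⟨hyv, rfl | ⟨hxv, hb⟩⟩)
    · exact Or.inr ⟨hxy, Or.inl rfl⟩
    · exact Or.inl rfl
    · exact Or.inr ⟨hxv, Or.inr ⟨hyv, hb⟩⟩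

lemma bad_cons_cons (hs : ∀ x y : V, A x y → A y x) (hi : ∀ x : V, ¬ A x x)
    {x y : V} {b : List V} (hxy : A x y) :
    Bad A (x :: y :: b) ↔ Bad A (y :: x :: b) := by
  have hne : x ≠ y := fun h => hi x (h ▸ hxy)
  simp only [bad_cons, starts_cons]
  constructor
  · rintro ((rfl | ⟨-, hx⟩) | (hy | hb))
    · exact absurd rfl hne
    · exact Or.inr (Or.inl hx)
    · exact Or.inl (Or.inr ⟨hxy, hy⟩)
    · exact Or.inr (Or.inr hb)
  · rintro ((rfl | ⟨-, hy⟩) | (hx | hb))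
    · exact absurd rfl hne.symm
    · exact Or.inr (Or.inl hy)
    · exact Or.inl (Or.inr ⟨hs _ _ hxy, hx⟩)
    · exact Or.inr (Or.inr hb)

lemma starts_swap (hs : ∀ x y : V, A x y → A y x)
    {v : V} {l l' : List V} (h : Swap A l l') :
    Starts A v l ↔ Starts A v l' := by
  obtain ⟨x, y, a, b, hxy, rfl, rfl⟩ := h
  simp only [starts_append]
  rw [starts_cons_cons hs hxy]

lemma red_swap (hs : ∀ x y : V, A x y → A y x) (hi : ∀ x : V, ¬ A x x)
    {l l' : List V} (h : Swap A l l') : Red A l ↔ Red A l' := by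
  obtain ⟨x, y, a, b, hxy, rfl, rfl⟩ := h
  unfold Red
  simp only [bad_append]
  rw [bad_cons_cons hs hi hxy]
  constructor <;>
  · rintro h (h1 | h2 | ⟨v, hv, hst⟩)
    · exact h (Or.inl h1)
    · exact h (Or.inr (Or.inl h2))
    · refine h (Or.inr (Or.inr ⟨v, hv, ?_⟩))
      first
        | exact (starts_cons_cons hs hxy).mpr hst
        | exact (starts_cons_cons hs hxy).mp hst

end Sym

section Del

variable [DecidableEq V]

def del (v : V) : List V → List V
  | [] => []
  | x :: xs => if v = x then xs else x :: del v xs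

@[simp] lemma del_nil (v : V) : del v ([] : List V) = [] := rfl

lemma del_cons (v x : V) (xs : List V) :
    del v (x :: xs) = if v = x then xs else x :: del v xs := rfl

@[simp] lemma del_cons_self (v : V) (xs : List V) : del v (v :: xs) = xs := by
  simp [del_cons]

lemma mem_of_mem_del {x v : V} {l : List V} (h : x ∈ del v l) : x ∈ l := by
  induction l with
  | nil => simpa using h
  | cons z m ih =>
    rw [del_cons] at h
    split at h
    · exact List.mem_cons_of_mem _ h
    · rcases List.mem_cons.mp h with rfl | h
      · exact List.mem_cons_self
      · exact List.mem_cons_of_mem _ (ih h)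

lemma del_append_right {v : V} {a : List V} (t : List V) (hv : v ∉ a) :
    del v (a ++ t) = a ++ del v t := by
  induction a with
  | nil => rfl
  | cons z m ih =>
    have hvz : v ≠ z := fun h => hv (h ▸ List.mem_cons_self)
    simp only [List.cons_append, del_cons, if_neg hvz]
    rw [ih (fun h => hv (List.mem_cons_of_mem _ h))]

lemma del_append_left {v : V} {a : List V} (t : List V) (hv : v ∈ a) :
    del v (a ++ t) = del v a ++ t := by
  induction a with
  | nil => simp at hv
  | cons z m ih =>
    by_cases hvz : v = z
    · subst hvz; simp
    · simp only [List.cons_append, del_cons, if_neg hvz]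
      rw [ih (by rcases List.mem_cons.mp hv with h | h; exact absurd h hvz; exact h)]

lemma length_del {v : V} {l : List V} (hv : v ∈ l) :
    (del v l).length + 1 = l.length := by
  induction l with
  | nil => simp at hv
  | cons z m ih =>
    by_cases hvz : v = z
    · subst hvz; simp
    · rw [del_cons, if_neg hvz]
      have : v ∈ m := by rcases List.mem_cons.mp hv with h | h; exact absurd h hvz; exact h
      simp only [List.length_cons, ih this]

lemma length_del_le (v : V) (l : List V) : (del v l).length ≤ l.length := by
  induction l with
  | nil => simp
  | cons z m ih =>
    rw [del_cons]
    split
    · simp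
    · simpa using Nat.succ_le_succ ih

lemma starts_del {v w : V} (hvw : v ≠ w) {l : List V} (h : Starts A v l) :
    Starts A v (del w l) := by
  induction l with
  | nil => exact absurd h (starts_nil v)
  | cons z m ih =>
    rcases starts_cons.mp h with rfl | ⟨hzv, hm⟩
    · rw [del_cons, if_neg (Ne.symm hvw)]
      exact starts_cons.mpr (Or.inl rfl)
    · by_cases hwz : w = z
      · subst hwz; rw [del_cons_self]; exact hm
      · rw [del_cons, if_neg hwz]
        exact starts_cons.mpr (Or.inr ⟨hzv, ih hm⟩)

lemma starts_of_starts_del {v z : V} (hvz : A v z) {l : List V}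
    (hv : Starts A v l) (hz : Starts A z (del v l)) : Starts A z l := by
  induction l with
  | nil => exact absurd hv (starts_nil v)
  | cons w m ih =>
    by_cases hvw : v = w
    · subst hvw
      rw [del_cons_self] at hz
      exact starts_cons.mpr (Or.inr ⟨hvz, hz⟩)
    · rw [del_cons, if_neg hvw] at hz
      rcases starts_cons.mp hv with rfl | ⟨hwv, hm⟩
      · exact absurd rfl hvw
      · rcases starts_cons.mp hz with rfl | ⟨hwz, hz'⟩
        · exact starts_cons.mpr (Or.inl rfl)
        · exact starts_cons.mpr (Or.inr ⟨hwz, ih hm hz'⟩)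

lemma del_comm {v w : V} (hvw : v ≠ w) (l : List V) :
    del v (del w l) = del w (del v l) := by
  induction l with
  | nil => rfl
  | cons z m ih =>
    by_cases hvz : v = z
    · subst hvz
      rw [del_cons_self, del_cons, if_neg (Ne.symm hvw), del_cons_self]
    · by_cases hwz : w = z
      · subst hwz
        rw [del_cons_self, del_cons, if_neg hvw, del_cons_self]
      · rw [del_cons, if_neg hwz, del_cons, if_neg hvz, del_cons, if_neg hvz,
          del_cons, if_neg hwz, ih]

end Del

section SE

variable (A) in
/-- commutation equivalence -/
def SE : List V → List V → Prop := Relation.EqvGen (Swap A)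

lemma se_refl (l : List V) : SE A l l := Relation.EqvGen.refl l

lemma se_of_swap {l l' : List V} (h : Swap A l l') : SE A l l' := Relation.EqvGen.rel _ _ h

lemma se_trans {a b c : List V} (h : SE A a b) (h' : SE A b c) : SE A a c :=
  Relation.EqvGen.trans _ _ _ h h'

lemma se_symm {a b : List V} (h : SE A a b) : SE A b a := Relation.EqvGen.symm _ _ h

lemma swap_perm {l l' : List V} (h : Swap A l l') : l.Perm l' := by
  obtain ⟨x, y, a, b, -, rfl, rfl⟩ := h
  exact (List.Perm.append_left a (List.Perm.swap y x b))

lemma se_perm {l l' : List V} (h : SE A l l') : l.Perm l' := by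
  induction h with
  | rel _ _ h => exact swap_perm h
  | refl => exact List.Perm.refl _
  | symm _ _ _ ih => exact ih.symm
  | trans _ _ _ _ _ ih ih' => exact ih.trans ih'

lemma swap_append_left {m m' : List V} (a : List V) (h : Swap A m m') :
    Swap A (a ++ m) (a ++ m') := by
  obtain ⟨x, y, c, d, hxy, rfl, rfl⟩ := h
  exact ⟨x, y, a ++ c, d, hxy, by simp, by simp⟩

lemma se_append_left {m m' : List V} (a : List V) (h : SE A m m') :
    SE A (a ++ m) (a ++ m') := by
  induction h with
  | rel _ _ h => exact se_of_swap (swap_append_left a h)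
  | refl => exact se_refl _
  | symm _ _ _ ih => exact se_symm ih
  | trans _ _ _ _ _ ih ih' => exact se_trans ih ih'

lemma se_cons {m m' : List V} (z : V) (h : SE A m m') : SE A (z :: m) (z :: m') :=
  se_append_left [z] h

lemma se_red (hs : ∀ x y : V, A x y → A y x) (hi : ∀ x : V, ¬ A x x)
    {l l' : List V} (h : SE A l l') : Red A l ↔ Red A l' := by
  induction h with
  | rel _ _ h => exact red_swap hs hi h
  | refl => exact Iff.rfl
  | symm _ _ _ ih => exact ih.symm
  | trans _ _ _ _ _ ih ih' => exact ih.trans ih'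

lemma se_starts (hs : ∀ x y : V, A x y → A y x)
    {v : V} {l l' : List V} (h : SE A l l') : Starts A v l ↔ Starts A v l' := by
  induction h with
  | rel _ _ h => exact starts_swap hs h
  | refl => exact Iff.rfl
  | symm _ _ _ ih => exact ih.symm
  | trans _ _ _ _ _ ih ih' => exact ih.trans ih'

lemma se_middle (hs : ∀ x y : V, A x y → A y x) {v : V} {a : List V}
    (ha : ∀ x ∈ a, A x v) (b : List V) :
    SE A (v :: (a ++ b)) (a ++ v :: b) := by
  induction a with
  | nil => exact se_refl _
  | cons z m ih =>
    have h1 : Swap A (v :: z :: (m ++ b)) (z :: v :: (m ++ b)) :=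
      ⟨v, z, [], m ++ b, hs _ _ (ha z (by simp)), rfl, rfl⟩
    refine se_trans (se_of_swap h1) ?_
    exact se_cons z (ih (fun x hx => ha x (by simp [hx])))

end SE

section DelRed

variable [DecidableEq V]

lemma del_of_starts (hi : ∀ x : V, ¬ A x x) {v : V} {a b : List V}
    (ha : ∀ x ∈ a, A x v) : del v (a ++ v :: b) = a ++ b := by
  rw [del_append_right _ (not_mem_of_all_adj hi ha), del_cons_self]

lemma red_del (hs : ∀ x y : V, A x y → A y x) (hi : ∀ x : V, ¬ A x x)
    {v : V} {l : List V} (hr : Red A l) (h : Starts A v l) : Red A (del v l) := by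
  obtain ⟨a, b, rfl, ha⟩ := h
  rw [del_of_starts hi ha]
  intro hbad
  rcases bad_append.mp hbad with h1 | h2 | ⟨u, hu, hst⟩
  · exact hr (bad_append.mpr (Or.inl h1))
  · exact hr (bad_append.mpr (Or.inr (Or.inl (bad_cons.mpr (Or.inr h2)))))
  · refine hr (bad_append.mpr (Or.inr (Or.inr ⟨u, hu, ?_⟩)))
    have huv : A v u := by
      obtain ⟨c, d, rfl, -⟩ := hu
      exact hs _ _ (ha u (by simp))
    exact starts_cons.mpr (Or.inr ⟨huv, hst⟩)

lemma not_starts_del (hi : ∀ x : V, ¬ A x x) {v : V} {l : List V}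
    (hr : Red A l) (h : Starts A v l) : ¬ Starts A v (del v l) := by
  obtain ⟨a, b, rfl, ha⟩ := h
  rw [del_of_starts hi ha]
  intro hst
  rcases starts_append.mp hst with h1 | ⟨-, h2⟩
  · exact not_mem_of_all_adj hi ha (starts_mem h1)
  · obtain ⟨c, d, rfl, hc⟩ := h2
    exact hr ⟨v, a, c, d, by simp, hc⟩

lemma se_cons_del (hs : ∀ x y : V, A x y → A y x) (hi : ∀ x : V, ¬ A x x)
    {v : V} {l : List V} (h : Starts A v l) : SE A (v :: del v l) l := by
  obtain ⟨a, b, rfl, ha⟩ := h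
  rw [del_of_starts hi ha]
  exact se_middle hs ha b

lemma del_swap (hi : ∀ x : V, ¬ A x x) {v : V} {l l' : List V} (h : Swap A l l') :
    SE A (del v l) (del v l') := by
  obtain ⟨x, y, a, b, hxy, rfl, rfl⟩ := h
  have hne : x ≠ y := fun h => hi x (h ▸ hxy)
  by_cases hva : v ∈ a
  · rw [del_append_left _ hva, del_append_left _ hva]
    exact se_of_swap ⟨x, y, del v a, b, hxy, rfl, rfl⟩
  · rw [del_append_right _ hva, del_append_right _ hva]
    by_cases hvx : v = x
    · subst hvx
      rw [del_cons_self, del_cons, if_neg hne, del_cons_self]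
      exact se_refl _
    · by_cases hvy : v = y
      · subst hvy
        rw [del_cons_self, del_cons, if_neg hvx, del_cons_self]
        exact se_refl _
      · rw [del_cons, if_neg hvx, del_cons, if_neg hvy,
          del_cons, if_neg hvy, del_cons, if_neg hvx]
        exact se_append_left a (se_of_swap ⟨x, y, [], del v b, hxy, rfl, rfl⟩)

end DelRed

section Action

variable (A : V → V → Prop) [DecidableEq V]

/-- reduced words -/
def RW := {l : List V // Red A l}

def SwapRW : RW A → RW A → Prop := fun l l' => Swap A l.1 l'.1

/-- reduced words modulo commutation -/
def QRW := Quot (SwapRW A)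

def mkQ (l : RW A) : QRW A := Quot.mk (SwapRW A) l

variable {A}

lemma mkQ_eq_of_se {l l' : List V} (hs : ∀ x y : V, A x y → A y x)
    (hi : ∀ x : V, ¬ A x x) (h : SE A l l') :
    ∀ (hr : Red A l) (hr' : Red A l'), mkQ A ⟨l, hr⟩ = mkQ A ⟨l', hr'⟩ := by
  induction h with
  | rel a b h => exact fun hr hr' => Quot.sound h
  | refl a => exact fun _ _ => rfl
  | symm a b h ih => exact fun hr hr' => (ih hr' hr).symm
  | trans a b c hab hbc ih ih' =>
    intro hr hr'
    have hb : Red A b := (se_red hs hi hab).mp hr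
    exact (ih hr hb).trans (ih' hb hr')

variable (hs : ∀ x y : V, A x y → A y x) (hi : ∀ x : V, ¬ A x x)

open Classical in
noncomputable def fRW (v : V) (l : RW A) : RW A :=
  if h : Starts A v l.1 then ⟨del v l.1, red_del hs hi l.2 h⟩
  else ⟨v :: l.1, red_cons.mpr ⟨h, l.2⟩⟩

lemma fRW_of_starts {v : V} {l : RW A} (h : Starts A v l.1) :
    (fRW hs hi v l).1 = del v l.1 := by
  unfold fRW; exact congrArg Subtype.val (dif_pos h)

lemma fRW_of_not_starts {v : V} {l : RW A} (h : ¬ Starts A v l.1) :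
    (fRW hs hi v l).1 = v :: l.1 := by
  unfold fRW; exact congrArg Subtype.val (dif_neg h)

noncomputable def fQ (v : V) : QRW A → QRW A :=
  Quot.lift (fun l => mkQ A (fRW hs hi v l)) (by
    intro l l' hswap
    have hse : SE A (fRW hs hi v l).1 (fRW hs hi v l').1 := by
      by_cases h : Starts A v l.1
      · have h' : Starts A v l'.1 := (starts_swap hs hswap).mp h
        rw [fRW_of_starts hs hi h, fRW_of_starts hs hi h']
        exact del_swap hi hswap
      · have h' : ¬ Starts A v l'.1 := fun hh => h ((starts_swap hs hswap).mpr hh)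
        rw [fRW_of_not_starts hs hi h, fRW_of_not_starts hs hi h']
        exact se_cons v (se_of_swap hswap)
    have := mkQ_eq_of_se hs hi hse (fRW hs hi v l).2 (fRW hs hi v l').2
    exact this)

@[simp] lemma fQ_mkQ (v : V) (l : RW A) :
    fQ hs hi v (mkQ A l) = mkQ A (fRW hs hi v l) := rfl

lemma fQ_invol (v : V) : Function.Involutive (fQ hs hi v) := by
  intro q
  induction q using Quot.ind with
  | _ l =>
    show fQ hs hi v (mkQ A (fRW hs hi v l)) = mkQ A l
    by_cases h : Starts A v l.1
    · have h1 : (fRW hs hi v l).1 = del v l.1 := fRW_of_starts hs hi h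
      have h2 : ¬ Starts A v (fRW hs hi v l).1 := by
        rw [h1]; exact not_starts_del hi l.2 h
      rw [fQ_mkQ]
      have h3 : (fRW hs hi v (fRW hs hi v l)).1 = v :: del v l.1 := by
        rw [fRW_of_not_starts hs hi h2, h1]
      have hse : SE A (fRW hs hi v (fRW hs hi v l)).1 l.1 := by
        rw [h3]; exact se_cons_del hs hi h
      exact mkQ_eq_of_se hs hi hse _ l.2
    · have h1 : (fRW hs hi v l).1 = v :: l.1 := fRW_of_not_starts hs hi h
      have h2 : Starts A v (fRW hs hi v l).1 := by
        rw [h1]; exact starts_cons.mpr (Or.inl rfl)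
      rw [fQ_mkQ]
      have h3 : (fRW hs hi v (fRW hs hi v l)).1 = l.1 := by
        rw [fRW_of_starts hs hi h2, h1, del_cons_self]
      have hse : SE A (fRW hs hi v (fRW hs hi v l)).1 l.1 := by rw [h3]; exact se_refl _
      exact mkQ_eq_of_se hs hi hse _ l.2

lemma fQ_comm {v w : V} (hvw : A v w) (q : QRW A) :
    fQ hs hi v (fQ hs hi w q) = fQ hs hi w (fQ hs hi v q) := by
  have hne : v ≠ w := fun h => hi v (h ▸ hvw)
  induction q using Quot.ind with
  | _ l =>
    simp only [show Quot.mk (SwapRW A) = mkQ A from rfl, fQ_mkQ]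
    by_cases hv : Starts A v l.1 <;> by_cases hw : Starts A w l.1
    · -- both delete
      have h1 : (fRW hs hi w l).1 = del w l.1 := fRW_of_starts hs hi hw
      have h2 : Starts A v (fRW hs hi w l).1 := by rw [h1]; exact starts_del hne hv
      have h3 : (fRW hs hi v l).1 = del v l.1 := fRW_of_starts hs hi hv
      have h4 : Starts A w (fRW hs hi v l).1 := by rw [h3]; exact starts_del (Ne.symm hne) hw
      have : (fRW hs hi v (fRW hs hi w l)).1 = (fRW hs hi w (fRW hs hi v l)).1 := by
        rw [fRW_of_starts hs hi h2, fRW_of_starts hs hi h4, h1, h3, del_comm hne]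
      exact congrArg (mkQ A) (Subtype.ext this)
    · -- v deletes, w prepends
      have h3 : (fRW hs hi v l).1 = del v l.1 := fRW_of_starts hs hi hv
      have h4 : ¬ Starts A w (fRW hs hi v l).1 := by
        rw [h3]; exact fun hh => hw (starts_of_starts_del hvw hv hh)
      have h1 : (fRW hs hi w l).1 = w :: l.1 := fRW_of_not_starts hs hi hw
      have h2 : Starts A v (fRW hs hi w l).1 := by
        rw [h1]; exact starts_cons.mpr (Or.inr ⟨hs _ _ hvw, hv⟩)
      have : (fRW hs hi v (fRW hs hi w l)).1 = (fRW hs hi w (fRW hs hi v l)).1 := by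
        rw [fRW_of_starts hs hi h2, fRW_of_not_starts hs hi h4, h1, h3,
          del_cons, if_neg hne]
      exact congrArg (mkQ A) (Subtype.ext this)
    · -- w deletes, v prepends
      have h3 : (fRW hs hi w l).1 = del w l.1 := fRW_of_starts hs hi hw
      have h4 : ¬ Starts A v (fRW hs hi w l).1 := by
        rw [h3]; exact fun hh => hv (starts_of_starts_del (hs _ _ hvw) hw hh)
      have h1 : (fRW hs hi v l).1 = v :: l.1 := fRW_of_not_starts hs hi hv
      have h2 : Starts A w (fRW hs hi v l).1 := by
        rw [h1]; exact starts_cons.mpr (Or.inr ⟨hvw, hw⟩)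
      have : (fRW hs hi v (fRW hs hi w l)).1 = (fRW hs hi w (fRW hs hi v l)).1 := by
        rw [fRW_of_not_starts hs hi h4, fRW_of_starts hs hi h2, h1, h3,
          del_cons, if_neg (Ne.symm hne)]
      exact congrArg (mkQ A) (Subtype.ext this)
    · -- both prepend
      have h1 : (fRW hs hi w l).1 = w :: l.1 := fRW_of_not_starts hs hi hw
      have h2 : ¬ Starts A v (fRW hs hi w l).1 := by
        rw [h1]
        intro hh
        rcases starts_cons.mp hh with rfl | ⟨-, hh⟩
        · exact hne rfl
        · exact hv hh
      have h3 : (fRW hs hi v l).1 = v :: l.1 := fRW_of_not_starts hs hi hv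
      have h4 : ¬ Starts A w (fRW hs hi v l).1 := by
        rw [h3]
        intro hh
        rcases starts_cons.mp hh with rfl | ⟨-, hh⟩
        · exact hne rfl
        · exact hw hh
      have hse : SE A (fRW hs hi v (fRW hs hi w l)).1 (fRW hs hi w (fRW hs hi v l)).1 := by
        rw [fRW_of_not_starts hs hi h2, fRW_of_not_starts hs hi h4, h1, h3]
        exact se_of_swap ⟨v, w, [], l.1, hvw, rfl, rfl⟩
      exact mkQ_eq_of_se hs hi hse _ _

/-- length on the quotient -/
def lenQ : QRW A → ℕ := Quot.lift (fun l => l.1.length) (by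
  intro l l' h
  exact (swap_perm h).length_eq)

/-- membership on the quotient -/
def memQ (x : V) : QRW A → Prop := Quot.lift (fun l => x ∈ l.1) (by
  intro l l' h
  exact propext ((swap_perm h).mem_iff))

@[simp] lemma lenQ_mkQ (l : RW A) : lenQ (mkQ A l) = l.1.length := rfl
@[simp] lemma memQ_mkQ (x : V) (l : RW A) : memQ x (mkQ A l) = (x ∈ l.1) := rfl

lemma lenQ_fQ (v : V) (q : QRW A) : lenQ (fQ hs hi v q) ≤ lenQ q + 1 := by
  induction q using Quot.ind with
  | _ l =>
    simp only [show Quot.mk (SwapRW A) = mkQ A from rfl, fQ_mkQ]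
    by_cases h : Starts A v l.1
    · rw [lenQ_mkQ, lenQ_mkQ, fRW_of_starts hs hi h]
      exact le_trans (length_del_le v l.1) (Nat.le_succ _)
    · rw [lenQ_mkQ, lenQ_mkQ, fRW_of_not_starts hs hi h]
      simp

lemma memQ_fQ {x : V} (v : V) (q : QRW A) (h : memQ x (fQ hs hi v q)) :
    x = v ∨ memQ x q := by
  induction q using Quot.ind with
  | _ l =>
    simp only [show Quot.mk (SwapRW A) = mkQ A from rfl, fQ_mkQ] at h ⊢
    by_cases hst : Starts A v l.1
    · rw [memQ_mkQ, fRW_of_starts hs hi hst] at h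
      exact Or.inr (mem_of_mem_del h)
    · rw [memQ_mkQ, fRW_of_not_starts hs hi hst] at h
      rcases List.mem_cons.mp h with rfl | h
      · exact Or.inl rfl
      · exact Or.inr h

end Action

end Combinatorics

section Group

variable [DecidableEq V] (L : Set (Finset V))

/-- the adjacency (commutation) relation coming from `L` -/
def Adj (v w : V) : Prop := v ≠ w ∧ ({v, w} : Finset V) ∈ L

lemma adj_symm : ∀ x y : V, Adj L x y → Adj L y x :=
  fun x y h => ⟨h.1.symm, by rw [Finset.pair_comm]; exact h.2⟩

lemma adj_irrefl : ∀ x : V, ¬ Adj L x x := fun x h => h.1 rfl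

local notation "W" => PresentedGroup (racgRels V L)

lemma of_mul_self (v : V) :
    (PresentedGroup.of (rels := racgRels V L) v) * PresentedGroup.of v = 1 := by
  have h : PresentedGroup.mk (racgRels V L) (FreeGroup.of v * FreeGroup.of v) = 1 := by
    apply (QuotientGroup.eq_one_iff _).mpr
    exact Subgroup.subset_normalClosure (Or.inl ⟨v, rfl⟩)
  rw [map_mul] at h; exact h

lemma of_inv (v : V) :
    (PresentedGroup.of (rels := racgRels V L) v)⁻¹ = PresentedGroup.of v :=
  inv_eq_of_mul_eq_one_right (of_mul_self L v)

lemma comm_of {v w : V} (h : Adj L v w) :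
    (PresentedGroup.of (rels := racgRels V L) v) * PresentedGroup.of w =
      PresentedGroup.of w * PresentedGroup.of v := by
  have hsq : ((PresentedGroup.of (rels := racgRels V L) v) * PresentedGroup.of w) ^ 2 = 1 := by
    have h2 : PresentedGroup.mk (racgRels V L)
        ((FreeGroup.of v * FreeGroup.of w) ^ 2) = 1 := by
      apply (QuotientGroup.eq_one_iff _).mpr
      exact Subgroup.subset_normalClosure (Or.inr ⟨v, w, h.1, h.2, rfl⟩)
    rw [map_pow, map_mul] at h2; exact h2
  have h3 : (PresentedGroup.of (rels := racgRels V L) v) * PresentedGroup.of w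
      = ((PresentedGroup.of (rels := racgRels V L) v) * PresentedGroup.of w)⁻¹ :=
    eq_inv_of_mul_eq_one_right (by rw [← sq]; exact hsq)
  rw [h3, mul_inv_rev, of_inv, of_inv]

/-- evaluation of a word in the group -/
def eval (l : List V) : W := (l.map PresentedGroup.of).prod

@[simp] lemma eval_nil : eval L ([] : List V) = 1 := rfl

@[simp] lemma eval_cons (v : V) (l : List V) :
    eval L (v :: l) = PresentedGroup.of v * eval L l := by
  simp [eval]

@[simp] lemma eval_append (a b : List V) :
    eval L (a ++ b) = eval L a * eval L b := by
  simp [eval]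

lemma commute_eval {v : V} {a : List V} (ha : ∀ x ∈ a, Adj L x v) :
    Commute (PresentedGroup.of (rels := racgRels V L) v) (eval L a) := by
  induction a with
  | nil => exact Commute.one_right _
  | cons z m ih =>
    rw [eval_cons]
    exact Commute.mul_right (comm_of L (adj_symm L _ _ (ha z (by simp))))
      (ih (fun x hx => ha x (by simp [hx])))

lemma eval_swap {l l' : List V} (h : Swap (Adj L) l l') : eval L l = eval L l' := by
  obtain ⟨x, y, a, b, hxy, rfl, rfl⟩ := h
  simp only [eval_append, eval_cons]
  rw [← mul_assoc (PresentedGroup.of x), comm_of L hxy, mul_assoc]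

/-- the permutation action of a generator on reduced words mod commutation -/
noncomputable def pQ (v : V) : Equiv.Perm (QRW (Adj L)) :=
  Function.Involutive.toPerm (fQ (adj_symm L) (adj_irrefl L) v)
    (fQ_invol (adj_symm L) (adj_irrefl L) v)

@[simp] lemma pQ_apply (v : V) (q : QRW (Adj L)) :
    pQ L v q = fQ (adj_symm L) (adj_irrefl L) v q := rfl

/-- the action of `W` on reduced words mod commutation -/
noncomputable def Phi : W →* Equiv.Perm (QRW (Adj L)) :=
  PresentedGroup.toGroup (f := pQ L) (by
    rintro r (⟨v, rfl⟩ | ⟨v, w, hne, hL, rfl⟩)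
    · rw [map_mul, FreeGroup.lift_apply_of]
      ext q
      simp only [Equiv.Perm.mul_apply, Equiv.Perm.one_apply, pQ_apply]
      exact fQ_invol _ _ v q
    · rw [map_pow, map_mul, FreeGroup.lift_apply_of, FreeGroup.lift_apply_of]
      ext q
      have hvw : Adj L v w := ⟨hne, hL⟩
      simp only [sq, Equiv.Perm.mul_apply, Equiv.Perm.one_apply, pQ_apply]
      rw [fQ_comm _ _ hvw]
      rw [fQ_invol, fQ_invol])

@[simp] lemma Phi_of (v : V) : Phi L (PresentedGroup.of v) = pQ L v :=
  PresentedGroup.toGroup.of _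

/-- the empty reduced word -/
def q0 : QRW (Adj L) := mkQ (Adj L) ⟨[], red_nil⟩

/-- normal form of a group element -/
noncomputable def NF (g : W) : QRW (Adj L) := Phi L g (q0 L)

/-- evaluation on the quotient -/
def evalQ : QRW (Adj L) → W :=
  Quot.lift (fun l => eval L l.1) (fun _ _ h => eval_swap L h)

@[simp] lemma evalQ_mkQ (l : RW (Adj L)) : evalQ L (mkQ (Adj L) l) = eval L l.1 := rfl

lemma evalQ_fQ (v : V) (q : QRW (Adj L)) :
    evalQ L (fQ (adj_symm L) (adj_irrefl L) v q) = PresentedGroup.of v * evalQ L q := by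
  induction q using Quot.ind with
  | _ l =>
    simp only [show Quot.mk (SwapRW (Adj L)) = mkQ (Adj L) from rfl, fQ_mkQ, evalQ_mkQ]
    by_cases h : Starts (Adj L) v l.1
    · rw [fRW_of_starts _ _ h]
      obtain ⟨a, b, hl, ha⟩ := h
      rw [hl, del_of_starts (adj_irrefl L) ha]
      have hc : PresentedGroup.of (rels := racgRels V L) v * eval L a
          = eval L a * PresentedGroup.of v := (commute_eval L ha).eq
      rw [eval_append, eval_append, eval_cons, ← mul_assoc, ← mul_assoc, hc,
        mul_assoc (eval L a), of_mul_self L, mul_one]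
    · rw [fRW_of_not_starts _ _ h, eval_cons]

lemma evalQ_Phi (g : W) : ∀ q, evalQ L (Phi L g q) = g * evalQ L q := by
  let H : Subgroup W :=
    { carrier := {g : W | ∀ q, evalQ L (Phi L g q) = g * evalQ L q}
      one_mem' := by intro q; simp
      mul_mem' := by
        intro x y hx hy q
        rw [map_mul, Equiv.Perm.mul_apply, hx, hy, mul_assoc]
      inv_mem' := by
        intro x hx q
        have h1 := hx (Phi L x⁻¹ q)
        rw [← Equiv.Perm.mul_apply, ← map_mul, mul_inv_cancel, map_one,
          Equiv.Perm.one_apply] at h1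
        exact eq_inv_mul_iff_mul_eq.mpr h1.symm }
  have : g ∈ H := by
    apply PresentedGroup.generated_by
    intro j q
    show evalQ L (Phi L (PresentedGroup.of j) q) = PresentedGroup.of j * evalQ L q
    rw [Phi_of, pQ_apply, evalQ_fQ]
  exact this

@[simp] lemma evalQ_q0 : evalQ L (q0 L) = 1 := rfl

lemma evalQ_NF (g : W) : evalQ L (NF L g) = g := by
  rw [NF, evalQ_Phi, evalQ_q0, mul_one]

lemma NF_eval_red {m : List V} (hm : Red (Adj L) m) :
    NF L (eval L m) = mkQ (Adj L) ⟨m, hm⟩ := by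
  induction m with
  | nil => simp only [eval_nil, NF, map_one, Equiv.Perm.one_apply]; rfl
  | cons v m' ih =>
    have h2 := red_cons.mp hm
    rw [NF, eval_cons, map_mul, Equiv.Perm.mul_apply, Phi_of, pQ_apply]
    rw [show (Phi L (eval L m')) (q0 L) = NF L (eval L m') from rfl, ih h2.2]
    show mkQ (Adj L) (fRW (adj_symm L) (adj_irrefl L) v ⟨m', h2.2⟩) = _
    apply congrArg
    apply Subtype.ext
    exact fRW_of_not_starts (adj_symm L) (adj_irrefl L) (l := ⟨m', h2.2⟩) h2.1

lemma eval_red_eq_one {m : List V} (hm : Red (Adj L) m) (h : eval L m = 1) : m = [] := by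
  have h1 := NF_eval_red L hm
  rw [h] at h1
  have h2 : NF L 1 = q0 L := by rw [NF, map_one, Equiv.Perm.one_apply]
  rw [h2] at h1
  have h3 := congrArg lenQ h1
  have h4 : m.length = 0 := h3.symm
  exact List.length_eq_zero_iff.mp h4

lemma lenQ_NF_eval_le (m : List V) : ∀ q, lenQ ((Phi L (eval L m)) q) ≤ m.length + lenQ q := by
  induction m with
  | nil => intro q; simp
  | cons v m' ih =>
    intro q
    rw [eval_cons, map_mul, Equiv.Perm.mul_apply, Phi_of, pQ_apply]
    calc lenQ (fQ _ _ v ((Phi L (eval L m')) q))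
        ≤ lenQ ((Phi L (eval L m')) q) + 1 := lenQ_fQ _ _ v _
      _ ≤ (m'.length + lenQ q) + 1 := by
          exact Nat.add_le_add_right (ih q) 1
      _ = (v :: m').length + lenQ q := by simp; ring

lemma memQ_NF_eval (m : List V) :
    ∀ q x, memQ x ((Phi L (eval L m)) q) → x ∈ m ∨ memQ x q := by
  induction m with
  | nil =>
    intro q x h
    rw [eval_nil, map_one, Equiv.Perm.one_apply] at h
    exact Or.inr h
  | cons v m' ih =>
    intro q x h
    rw [eval_cons, map_mul, Equiv.Perm.mul_apply, Phi_of, pQ_apply] at h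
    rcases memQ_fQ _ _ v _ h with rfl | h
    · exact Or.inl (by simp)
    · rcases ih q x h with h | h
      · exact Or.inl (by simp [h])
      · exact Or.inr h

lemma ell_eval_le (m : List V) : lenQ (NF L (eval L m)) ≤ m.length := by
  exact lenQ_NF_eval_le L m (q0 L)

lemma mem_of_memQ_NF_eval {m : List V} {x : V} (h : memQ x (NF L (eval L m))) : x ∈ m := by
  rcases memQ_NF_eval L m (q0 L) x h with h | h
  · exact h
  · simp [q0, memQ, mkQ] at h

/-- concatenated powers of a word -/
def powL (w : List V) : ℕ → List V
  | 0 => []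
  | n + 1 => w ++ powL w n

omit [DecidableEq V] in
lemma length_powL (w : List V) (n : ℕ) : (powL w n).length = n * w.length := by
  induction n with
  | zero => simp [powL]
  | succ n ih => simp [powL, ih]; ring

lemma eval_powL (w : List V) (n : ℕ) : eval L (powL w n) = (eval L w) ^ n := by
  induction n with
  | zero => simp [powL]
  | succ n ih => rw [powL, eval_append, ih, pow_succ']

omit [DecidableEq V] in
lemma red_powL {A : V → V → Prop} (hi : ∀ x : V, ¬ A x x) {w : List V} (hw : Red A w)
    (hc : ∀ v, ¬ (Ends A v w ∧ Starts A v w)) (n : ℕ) :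
    Red A (powL w n) ∧ ∀ v, Ends A v w → ¬ Starts A v (powL w n) := by
  induction n with
  | zero => exact ⟨red_nil, fun v _ => starts_nil v⟩
  | succ n ih =>
    constructor
    · intro hbad
      rcases bad_append.mp hbad with h | h | ⟨v, hv, hstv⟩
      · exact hw h
      · exact ih.1 h
      · exact ih.2 v hv hstv
    · intro v hv hstv
      rcases starts_append.mp hstv with h | ⟨hall, h⟩
      · exact hc v ⟨hv, h⟩
      · exact hi v (hall v (ends_mem hv))

lemma not_finOrder {w : List V} (hw : Red (Adj L) w) (hne : w ≠ [])
    (hc : ∀ v, ¬ (Ends (Adj L) v w ∧ Starts (Adj L) v w)) :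
    ¬ IsOfFinOrder (eval L w) := by
  intro hf
  obtain ⟨n, hn, h1⟩ := isOfFinOrder_iff_pow_eq_one.mp hf
  have h2 : eval L (powL w n) = 1 := by rw [eval_powL]; exact h1
  have h3 := eval_red_eq_one L (red_powL (adj_irrefl L) hw hc n).1 h2
  have h4 := congrArg List.length h3
  rw [length_powL] at h4
  simp only [List.length_nil] at h4
  rcases Nat.mul_eq_zero.mp h4 with h | h
  · omega
  · exact hne (List.length_eq_zero_iff.mp h)

lemma extract {v : V} {l : List V} (hst : Starts (Adj L) v l) (hen : Ends (Adj L) v l) :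
    (∃ m, eval L l = PresentedGroup.of v * eval L m ∧ (∀ x ∈ m, Adj L x v) ∧
      m.length + 1 = l.length ∧ ∀ x ∈ m, x ∈ l) ∨
    (∃ m, eval L l = PresentedGroup.of v * eval L m * PresentedGroup.of v ∧
      m.length + 2 = l.length ∧ ∀ x ∈ m, x ∈ l) := by
  obtain ⟨a, b, rfl, ha⟩ := hst
  obtain ⟨e, f, hef, hf⟩ := hen
  have hca : PresentedGroup.of (rels := racgRels V L) v * eval L a
      = eval L a * PresentedGroup.of v := (commute_eval L ha).eq
  have key : ∀ Y : PresentedGroup (racgRels V L),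
      eval L a * (PresentedGroup.of v * Y) = PresentedGroup.of v * (eval L a * Y) :=
    fun Y => by rw [← mul_assoc, ← hca, mul_assoc]
  rcases List.append_eq_append_iff.mp hef with ⟨k, hk1, hk2⟩ | ⟨k, hk1, hk2⟩
  · cases k with
    | nil =>
      simp only [List.nil_append] at hk2
      obtain rfl : b = f := by injection hk2
      refine Or.inl ⟨a ++ b, ?_, ?_, by simp; omega, by intro x hx; simp at hx ⊢; tauto⟩
      · simp only [eval_append, eval_cons, mul_assoc]
        rw [key]
      · intro x hx
        rcases List.mem_append.mp hx with h | h
        · exact ha x h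
        · exact hf x h
    | cons u k' =>
      obtain ⟨rfl, hb⟩ : v = u ∧ b = k' ++ v :: f := by
        constructor
        · exact List.head_eq_of_cons_eq hk2
        · simpa using List.tail_eq_of_cons_eq hk2
      subst hb
      refine Or.inr ⟨a ++ (k' ++ f), ?_, by simp; omega, by intro x hx; simp at hx ⊢; tauto⟩
      have hcf : PresentedGroup.of (rels := racgRels V L) v * eval L f
          = eval L f * PresentedGroup.of v := (commute_eval L hf).eq
      simp only [eval_append, eval_cons, mul_assoc]
      rw [hcf, key]
  · cases k with
    | nil =>
      simp only [List.append_nil] at hk1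
      subst hk1
      obtain rfl : f = b := by simpa using hk2
      refine Or.inl ⟨a ++ f, ?_, ?_, by simp; omega, by intro x hx; simp at hx ⊢; tauto⟩
      · simp only [eval_append, eval_cons, mul_assoc]
        rw [key]
      · intro x hx
        rcases List.mem_append.mp hx with h | h
        · exact ha x h
        · exact hf x h
    | cons u k' =>
      obtain rfl : v = u := List.head_eq_of_cons_eq hk2
      exact absurd (ha v (by rw [hk1]; simp)) (adj_irrefl L v)

theorem conj_clique (g : PresentedGroup (racgRels V L)) (hfin : IsOfFinOrder g) :
    ∃ xl c : List V, c.Pairwise (Adj L) ∧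
      g = eval L xl * eval L c * (eval L xl)⁻¹ ∧
      (∀ u ∈ xl, memQ u (NF L g)) ∧ (∀ u ∈ c, memQ u (NF L g)) := by
  suffices H : ∀ n : ℕ, ∀ g : PresentedGroup (racgRels V L), lenQ (NF L g) ≤ n →
      IsOfFinOrder g →
      ∃ xl c : List V, c.Pairwise (Adj L) ∧
        g = eval L xl * eval L c * (eval L xl)⁻¹ ∧
        (∀ u ∈ xl, memQ u (NF L g)) ∧ (∀ u ∈ c, memQ u (NF L g)) by
    exact H _ g le_rfl hfin
  intro n
  induction n using Nat.strong_induction_on with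
  | _ n ih =>
    intro g hlen hfin
    obtain ⟨lr, hlr⟩ := Quot.exists_rep (NF L g)
    have hNF : mkQ (Adj L) lr = NF L g := hlr
    have hg : g = eval L lr.1 := by
      rw [← evalQ_NF L g, ← hNF, evalQ_mkQ]
    have hmemNF : ∀ u, u ∈ lr.1 → memQ u (NF L g) := by
      intro u hu
      rw [← hNF, memQ_mkQ]
      exact hu
    have hglen : lr.1.length ≤ n := by
      have : lenQ (NF L g) = lr.1.length := by rw [← hNF, lenQ_mkQ]
      omega
    by_cases hnil : lr.1 = []
    · refine ⟨[], [], by simp, ?_, by simp, by simp⟩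
      rw [hg, hnil]
      simp
    by_cases hex : ∃ v, Starts (Adj L) v lr.1 ∧ Ends (Adj L) v lr.1
    · obtain ⟨v, hst, hen⟩ := hex
      have hvl : v ∈ lr.1 := starts_mem hst
      rcases extract L hst hen with ⟨m, hm, hadj, hml, hmem⟩ | ⟨m, hm, hml, hmem⟩
      · -- v central, appearing once
        have hc : Commute (PresentedGroup.of (rels := racgRels V L) v) (eval L m) :=
          commute_eval L hadj
        have hgvh : g = PresentedGroup.of v * eval L m := by rw [hg, hm]
        have hfin_h : IsOfFinOrder (eval L m) := by
          obtain ⟨k, hk, hgk⟩ := isOfFinOrder_iff_pow_eq_one.mp hfin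
          refine isOfFinOrder_iff_pow_eq_one.mpr ⟨2 * k, by positivity, ?_⟩
          have hcg : Commute (PresentedGroup.of (rels := racgRels V L) v) g := by
            rw [hgvh]; exact (Commute.refl _).mul_right hc
          have hhvg : eval L m = PresentedGroup.of v * g := by
            rw [hgvh, ← mul_assoc, of_mul_self, one_mul]
          rw [hhvg, (hcg.mul_pow (2 * k))]
          have h1 : (PresentedGroup.of (rels := racgRels V L) v) ^ (2 * k) = 1 := by
            rw [pow_mul]
            have : (PresentedGroup.of (rels := racgRels V L) v) ^ 2 = 1 := by
              rw [sq]; exact of_mul_self L v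
            rw [this, one_pow]
          have h2 : g ^ (2 * k) = 1 := by
            rw [mul_comm 2 k, pow_mul, hgk, one_pow]
          rw [h1, h2, one_mul]
        have hmlt : m.length < n := by omega
        obtain ⟨xl, c, hpw, hconj, hxm, hcm⟩ :=
          ih m.length hmlt (eval L m) (ell_eval_le L m) hfin_h
        have hx' : ∀ u ∈ xl, u ∈ m := fun u hu => mem_of_memQ_NF_eval L (hxm u hu)
        have hc' : ∀ u ∈ c, u ∈ m := fun u hu => mem_of_memQ_NF_eval L (hcm u hu)
        refine ⟨xl, v :: c, ?_, ?_, ?_, ?_⟩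
        · rw [List.pairwise_cons]
          exact ⟨fun u hu => adj_symm L _ _ (hadj u (hc' u hu)), hpw⟩
        · have hcx : Commute (PresentedGroup.of (rels := racgRels V L) v) (eval L xl) :=
            commute_eval L (fun x hx => hadj x (hx' x hx))
          rw [eval_cons, hgvh, hconj, ← mul_assoc, ← mul_assoc, ← mul_assoc, hcx.eq,
            mul_assoc (eval L xl)]
        · exact fun u hu => hmemNF u (hmem u (hx' u hu))
        · intro u hu
          rcases List.mem_cons.mp hu with rfl | hu
          · exact hmemNF u hvl
          · exact hmemNF u (hmem u (hc' u hu))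
      · -- v at both ends
        have hgh : g = PresentedGroup.of v * eval L m * PresentedGroup.of v := by rw [hg, hm]
        have hfin_h : IsOfFinOrder (eval L m) := by
          obtain ⟨k, hk, hgk⟩ := isOfFinOrder_iff_pow_eq_one.mp hfin
          refine isOfFinOrder_iff_pow_eq_one.mpr ⟨k, hk, ?_⟩
          have hme : eval L m = PresentedGroup.of v * g * (PresentedGroup.of v)⁻¹ := by
            rw [of_inv, hgh, ← mul_assoc, ← mul_assoc, of_mul_self, one_mul,
              mul_assoc, of_mul_self, mul_one]
          rw [hme, conj_pow, hgk, mul_one, mul_inv_cancel]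
        have hmlt : m.length < n := by omega
        obtain ⟨xl, c, hpw, hconj, hxm, hcm⟩ :=
          ih m.length hmlt (eval L m) (ell_eval_le L m) hfin_h
        have hx' : ∀ u ∈ xl, u ∈ m := fun u hu => mem_of_memQ_NF_eval L (hxm u hu)
        have hc' : ∀ u ∈ c, u ∈ m := fun u hu => mem_of_memQ_NF_eval L (hcm u hu)
        refine ⟨v :: xl, c, hpw, ?_, ?_, ?_⟩
        · rw [eval_cons, hgh, hconj, mul_inv_rev, of_inv]
          simp only [mul_assoc]
        · intro u hu
          rcases List.mem_cons.mp hu with rfl | hu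
          · exact hmemNF u hvl
          · exact hmemNF u (hmem u (hx' u hu))
        · exact fun u hu => hmemNF u (hmem u (hc' u hu))
    · push_neg at hex
      exfalso
      refine not_finOrder L lr.2 hnil (fun v hv => hex v hv.2 hv.1) ?_
      rw [← hg]
      exact hfin

end Group

end RacgProof

theorem stmt_1 {V : Type*} [DecidableEq V] (L : Set (Finset V))
    -- `L` is a simplicial complex with vertex set `V`:
    (hne : ∀ σ ∈ L, σ.Nonempty)
    (hdown : ∀ σ ∈ L, ∀ τ ⊆ σ, τ.Nonempty → τ ∈ L)
    (hvert : ∀ v : V, ({v} : Finset V) ∈ L)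
    -- `L` is a flag complex:
    (hflag : ∀ σ : Finset V, σ.Nonempty →
      (∀ v ∈ σ, ∀ w ∈ σ, v ≠ w → ({v, w} : Finset V) ∈ L) → σ ∈ L)
    -- the characteristic function `λ` into the `ℤ/2`-vector space `G`:
    {G : Type*} [AddCommGroup G] [Module (ZMod 2) G] (lam : V → G)
    (hchar : ∀ σ ∈ L, LinearIndependent (ZMod 2) (fun v : σ => lam v))
    -- `Λ : W_L → G`, the homomorphism extending `λ`:
    (Λ : PresentedGroup (racgRels V L) →* Multiplicative G)
    (hΛ : ∀ v : V, Λ (PresentedGroup.of v) = Multiplicative.ofAdd (lam v)) :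
    -- `ker Λ` is torsion-free:
    ∀ g ∈ Λ.ker, IsOfFinOrder g → g = 1 := by

  intro g hker hfin
  obtain ⟨xl, c, hpw, hconj, -, -⟩ := RacgProof.conj_clique L g hfin
  have hevalc : ∀ m : List V, Λ (RacgProof.eval L m) =
      Multiplicative.ofAdd ((m.map lam).sum) := by
    intro m
    induction m with
    | nil => simp [RacgProof.eval_nil]
    | cons v m' ih =>
      rw [RacgProof.eval_cons, map_mul, hΛ, ih, List.map_cons, List.sum_cons, ofAdd_add]
  have hΛg : Λ g = Multiplicative.ofAdd ((c.map lam).sum) := by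
    rw [hconj, map_mul, map_mul, map_inv, mul_comm (Λ (RacgProof.eval L xl)),
      mul_inv_cancel_right, hevalc]
  have hsum : (c.map lam).sum = 0 := by
    have h1 : Λ g = 1 := hker
    rw [hΛg, ofAdd_eq_one] at h1
    exact h1
  by_cases hc : c = []
  · subst hc
    rw [hconj, RacgProof.eval_nil, mul_one, mul_inv_cancel]
  · exfalso
    have hnodup : c.Nodup := hpw.imp (fun h => h.1)
    have hsym : Symmetric (RacgProof.Adj L) := fun x y => RacgProof.adj_symm L x y
    have hSN : c.toFinset.Nonempty := by
      obtain ⟨v, hv⟩ := List.exists_mem_of_ne_nil c hc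
      exact ⟨v, List.mem_toFinset.mpr hv⟩
    have hSL : c.toFinset ∈ L := by
      apply hflag _ hSN
      intro v hv w hw hvw
      have : Std.Symm (RacgProof.Adj L) := ⟨fun a b h => hsym h⟩
      exact (hpw.forall (List.mem_toFinset.mp hv) (List.mem_toFinset.mp hw) hvw).2
    have hli := hchar _ hSL
    have hsum2 : ∑ v ∈ c.toFinset, lam v = 0 := by
      rw [List.sum_toFinset _ hnodup]
      exact hsum
    rw [← Finset.sum_coe_sort] at hsum2
    have hz := Fintype.linearIndependent_iff.mp hli (fun _ => 1)
      (by simpa [one_smul] using hsum2)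
    obtain ⟨v, hv⟩ := hSN
    exact one_ne_zero (hz ⟨v, hv⟩)
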